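/- Let n ≥ 1, let m ≥ 2 be an integer, let C be a ℤ-submodule of (ℤ/mℤ)^n, and let Λ_A(C) = {x ∈ ℤ^n : (x mod m) ∈ C} be the associated Construction A lattice. Then for every real q with 0 ≤ q < 1, ∑_{x ∈ Λ_A(C)} q^{‖x‖₁} = (1 - q^m)^{-n} · ∑_{c ∈ C} ∏_{i=1}^n (q^{c̄ᵢ} + q^{m - c̄ᵢ}), where c̄ᵢ ∈ {0, 1, …, m−1} denotes the integer representative of the coordinate cᵢ ∈ ℤ/mℤ. (Both series converge absolutely.) -/

import Mathlib

open scoped ENNReal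

private lemma tsum_pi_int (n : ℕ) (f : Fin n → ℤ → ℝ≥0∞) :
    ∑' k : Fin n → ℤ, ∏ i, f i (k i) = ∏ i, ∑' z : ℤ, f i z := by
  induction n with
  | zero =>
    rw [tsum_eq_single (default : Fin 0 → ℤ) (fun b hb => (hb (Subsingleton.elim b default)).elim)]
    simp
  | succ n ih =>
    rw [← (Fin.consEquiv (fun _ : Fin (n+1) => ℤ)).tsum_eq, Fin.prod_univ_succ]
    rw [ENNReal.tsum_prod']
    simp only [Fin.consEquiv_apply, Fin.prod_univ_succ, Fin.cons_zero, Fin.cons_succ]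
    rw [show (∑' (a : ℤ) (b : Fin n → ℤ), f 0 a * ∏ i, f i.succ (b i))
        = ∑' (a : ℤ), f 0 a * ∑' (b : Fin n → ℤ), ∏ i, f i.succ (b i) by
      congr 1; funext a; rw [ENNReal.tsum_mul_left],
      ENNReal.tsum_mul_right, ih (fun i => f i.succ)]

private lemma tsum_coord (m v : ℕ) (hv : v < m) (Q : ℝ≥0∞) :
    ∑' k : ℤ, Q ^ ((v : ℤ) + (m : ℤ) * k).natAbs
      = (Q ^ v + Q ^ (m - v)) * (1 - Q ^ m)⁻¹ := by
  rw [tsum_of_nat_of_neg_add_one ENNReal.summable ENNReal.summable]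
  have h1 : ∀ k : ℕ, ((v : ℤ) + (m:ℤ) * (k:ℤ)).natAbs = v + m * k := by
    intro k
    have : (v : ℤ) + (m:ℤ) * (k:ℤ) = ((v + m * k : ℕ) : ℤ) := by push_cast; ring
    rw [this, Int.natAbs_natCast]
  have h2 : ∀ k : ℕ, ((v : ℤ) + (m:ℤ) * (-((k:ℤ) + 1))).natAbs = (m - v) + m * k := by
    intro k
    have : (v : ℤ) + (m:ℤ) * (-((k:ℤ) + 1)) = -(((m - v) + m * k : ℕ) : ℤ) := by
      push_cast [Nat.cast_sub hv.le]; ring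
    rw [this, Int.natAbs_neg, Int.natAbs_natCast]
  simp only [h1, h2, pow_add, pow_mul, ENNReal.tsum_mul_left, ENNReal.tsum_geometric]
  ring

private lemma theta_ennreal (n m : ℕ) (hm : 2 ≤ m)
    (C : Submodule ℤ (Fin n → ZMod m)) (Q : ℝ≥0∞) :
    ∑' x : {x : Fin n → ℤ // (fun i => ((x i : ℤ) : ZMod m)) ∈ C},
        Q ^ (∑ i, (x.val i).natAbs)
      = (1 - Q ^ m)⁻¹ ^ n *
        ∑' c : C, ∏ i, (Q ^ (((c : Fin n → ZMod m)) i).val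
          + Q ^ (m - (((c : Fin n → ZMod m)) i).val)) := by
  haveI : NeZero m := ⟨by omega⟩
  have hm0 : (m : ℤ) ≠ 0 := by exact_mod_cast (by omega : m ≠ 0)
  set Λ := {x : Fin n → ℤ // (fun i => ((x i : ℤ) : ZMod m)) ∈ C} with hΛ
  have hmem : ∀ (c : C) (k : Fin n → ℤ),
      (fun i => ((((((c : Fin n → ZMod m)) i).val : ℤ) + m * k i : ℤ) : ZMod m)) ∈ C := by
    intro c k
    have he : (fun i => ((((((c : Fin n → ZMod m)) i).val : ℤ) + m * k i : ℤ) : ZMod m))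
        = (c : Fin n → ZMod m) := by
      funext i
      push_cast
      simp [ZMod.natCast_val, ZMod.cast_id, ZMod.natCast_self]
    rw [he]; exact c.2
  let g : (Σ _ : C, (Fin n → ℤ)) → Λ := fun p =>
    ⟨fun i => ((((p.1 : Fin n → ZMod m)) i).val : ℤ) + m * p.2 i, hmem p.1 p.2⟩
  have hg : Function.Bijective g := by
    constructor
    · rintro ⟨c, k⟩ ⟨c', k'⟩ h
      have hi : ∀ i, ((((c : Fin n → ZMod m)) i).val : ℤ) + m * k i
          = ((((c' : Fin n → ZMod m)) i).val : ℤ) + m * k' i :=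
        fun i => congrFun (Subtype.ext_iff.mp h) i
      have hci : ∀ i, ((c : Fin n → ZMod m)) i = ((c' : Fin n → ZMod m)) i := by
        intro i
        have h2 := congrArg (fun z : ℤ => (z : ZMod m)) (hi i)
        push_cast at h2
        simpa [ZMod.natCast_val, ZMod.cast_id, ZMod.natCast_self] using h2
      have hc : c = c' := Subtype.ext (funext hci)
      subst hc
      have hk : k = k' := by
        funext i
        have h3 := add_left_cancel (hi i)
        exact mul_left_cancel₀ hm0 h3
      rw [hk]
    · rintro ⟨x, hx⟩
      refine ⟨⟨⟨fun i => ((x i : ℤ) : ZMod m), hx⟩,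
        fun i => (x i - ((((x i : ℤ) : ZMod m)).val : ℤ)) / m⟩, ?_⟩
      apply Subtype.ext
      funext i
      have hd : (m : ℤ) ∣ x i - ((((x i : ℤ) : ZMod m)).val : ℤ) := by
        rw [← ZMod.intCast_zmod_eq_zero_iff_dvd]
        push_cast
        simp [ZMod.natCast_val, ZMod.cast_id]
      show ((((x i : ℤ) : ZMod m)).val : ℤ)
          + m * ((x i - ((((x i : ℤ) : ZMod m)).val : ℤ)) / m) = x i
      rw [Int.mul_ediv_cancel' hd]
      ring
  rw [← (Equiv.ofBijective g hg).tsum_eq, ENNReal.tsum_sigma']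
  have hinner : ∀ c : C,
      (∑' k : Fin n → ℤ,
        Q ^ (∑ i, (((((c : Fin n → ZMod m)) i).val : ℤ) + m * k i).natAbs))
      = (∏ i, (Q ^ (((c : Fin n → ZMod m)) i).val
          + Q ^ (m - (((c : Fin n → ZMod m)) i).val))) * ((1 - Q ^ m)⁻¹) ^ n := by
    intro c
    have hsplit : ∀ k : Fin n → ℤ,
        Q ^ (∑ i, (((((c : Fin n → ZMod m)) i).val : ℤ) + m * k i).natAbs)
        = ∏ i, Q ^ ((((((c : Fin n → ZMod m)) i).val : ℤ) + m * k i).natAbs) :=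
      fun k => (Finset.prod_pow_eq_pow_sum _ _ _).symm
    simp_rw [hsplit]
    rw [tsum_pi_int n (fun i z => Q ^ ((((((c : Fin n → ZMod m)) i).val : ℤ) + m * z).natAbs)),
      Finset.prod_congr rfl fun i _ => tsum_coord m _ (ZMod.val_lt _) Q,
      Finset.prod_mul_distrib, Finset.prod_const, Finset.card_univ, Fintype.card_fin]
  calc ∑' (a : C) (b : Fin n → ℤ), Q ^ (∑ i, ((g ⟨a, b⟩).val i).natAbs)
      = ∑' c : C, (∏ i, (Q ^ (((c : Fin n → ZMod m)) i).val
          + Q ^ (m - (((c : Fin n → ZMod m)) i).val))) * ((1 - Q ^ m)⁻¹) ^ n :=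
        tsum_congr fun c => hinner c
    _ = _ := by rw [ENNReal.tsum_mul_right, mul_comm]

/-- Theorem: ℓ¹-theta function of a Construction A lattice from an m-ary linear code. -/
theorem theta_one_constructionA
    (n m : ℕ) (hn : 1 ≤ n) (hm : 2 ≤ m)
    (C : Submodule ℤ (Fin n → ZMod m))
    (q : ℝ) (hq0 : 0 ≤ q) (hq1 : q < 1) :
    Summable (fun x : {x : Fin n → ℤ // (fun i => ((x i : ℤ) : ZMod m)) ∈ C} =>
      q ^ (∑ i, (x.val i).natAbs)) ∧
    (∑' x : {x : Fin n → ℤ // (fun i => ((x i : ℤ) : ZMod m)) ∈ C},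
        q ^ (∑ i, (x.val i).natAbs))
      = (1 - q ^ m)⁻¹ ^ n *
        ∑' c : C, ∏ i, (q ^ (((c : Fin n → ZMod m)) i).val
          + q ^ (m - (((c : Fin n → ZMod m)) i).val)) := by
  haveI : NeZero m := ⟨by omega⟩
  haveI : Fintype C := Fintype.ofFinite _
  set Q : ℝ≥0∞ := ENNReal.ofReal q with hQ
  have hQtop : ∀ k : ℕ, Q ^ k ≠ ⊤ := fun k => ENNReal.pow_ne_top ENNReal.ofReal_ne_top
  have hQto : ∀ k : ℕ, (Q ^ k).toReal = q ^ k := fun k => by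
    rw [ENNReal.toReal_pow, ENNReal.toReal_ofReal hq0]
  have hQm1 : Q ^ m < 1 :=
    pow_lt_one₀ zero_le (by simpa [hQ] using ENNReal.ofReal_lt_one.mpr hq1) (by omega)
  have hsub : (1 : ℝ≥0∞) - Q ^ m ≠ 0 := by
    simp only [ne_eq, tsub_eq_zero_iff_le, not_le]
    exact hQm1
  have hinv : ((1 : ℝ≥0∞) - Q ^ m)⁻¹ ≠ ⊤ := ENNReal.inv_ne_top.mpr hsub
  have hterm : ∀ c : C, (∏ i, (Q ^ (((c : Fin n → ZMod m)) i).val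
      + Q ^ (m - (((c : Fin n → ZMod m)) i).val))) ≠ ⊤ := by
    intro c
    refine (ENNReal.prod_lt_top ?_).ne
    intro i _
    exact (ENNReal.add_ne_top.mpr ⟨hQtop _, hQtop _⟩).lt_top
  have hS : (∑' c : C, ∏ i, (Q ^ (((c : Fin n → ZMod m)) i).val
      + Q ^ (m - (((c : Fin n → ZMod m)) i).val))) ≠ ⊤ := by
    rw [tsum_fintype]
    exact (ENNReal.sum_lt_top.mpr fun c _ => (hterm c).lt_top).ne
  have hT := theta_ennreal n m hm C Q
  have hTne : (∑' x : {x : Fin n → ℤ // (fun i => ((x i : ℤ) : ZMod m)) ∈ C},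
      Q ^ (∑ i, (x.val i).natAbs)) ≠ ⊤ := by
    rw [hT]; exact ENNReal.mul_ne_top (ENNReal.pow_ne_top hinv) hS
  have hfun : (fun x : {x : Fin n → ℤ // (fun i => ((x i : ℤ) : ZMod m)) ∈ C} =>
      q ^ (∑ i, (x.val i).natAbs))
      = fun x => (Q ^ (∑ i, (x.val i).natAbs)).toReal := funext fun x => (hQto _).symm
  constructor
  · rw [hfun]; exact ENNReal.summable_toReal hTne
  · rw [hfun, ← ENNReal.tsum_toReal_eq (fun x => hQtop _), hT,
      ENNReal.toReal_mul, ENNReal.toReal_pow, ENNReal.toReal_inv,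
      ENNReal.toReal_sub_of_le hQm1.le ENNReal.one_ne_top, ENNReal.toReal_one, hQto]
    congr 1
    rw [tsum_fintype, tsum_fintype, ENNReal.toReal_sum fun c _ => hterm c]
    refine Finset.sum_congr rfl fun c _ => ?_
    rw [ENNReal.toReal_prod]
    exact Finset.prod_congr rfl fun i _ => by
      rw [ENNReal.toReal_add (hQtop _) (hQtop _), hQto, hQto]
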